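/- For pure states ψ and φ of disjoint sets of qudits, N_{ψ⊗φ} = N_ψ + N_φ, where N_χ is the minimal k such that W_{k+1}^χ = W_k^χ (i.e. the degree of the entanglement polynomial). -/

import Mathlib

noncomputable section

open Matrix

/-- An operator on `N` qudits (Hilbert space modeled as functions `(ι → Fin d) → ℂ`)
is *supported on* the set of sites `B` if it has the form `O_B ⊗ I_{B̄}`:
its matrix elements vanish unless the configurations agree off `B`, and they do not
depend on the (common) configuration off `B`. -/
def SupportedOn {ι : Type*} [DecidableEq ι] (d : ℕ) (B : Finset ι)
    (M : Matrix (ι → Fin d) (ι → Fin d) ℂ) : Prop :=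
  (∀ x y : ι → Fin d, (∃ i ∉ B, x i ≠ y i) → M x y = 0) ∧
  (∀ x y z z' : ι → Fin d,
    M (fun i => if i ∈ B then x i else z i) (fun i => if i ∈ B then y i else z i) =
    M (fun i => if i ∈ B then x i else z' i) (fun i => if i ∈ B then y i else z' i))

/-- `V^k`: the span of operators supported on at most `k` sites (the `k`-local operators). -/
def Vk (ι : Type*) [DecidableEq ι] (d k : ℕ) :
    Submodule ℂ (Matrix (ι → Fin d) (ι → Fin d) ℂ) :=
  Submodule.span ℂ {M | ∃ B : Finset ι, B.card ≤ k ∧ SupportedOn d B M}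

/-- `W_k^ψ = Span{Oψ : O ∈ V^k}`. -/
def Wk {ι : Type*} [Fintype ι] [DecidableEq ι] {d : ℕ} (ψ : (ι → Fin d) → ℂ) (k : ℕ) :
    Submodule ℂ ((ι → Fin d) → ℂ) :=
  Submodule.span ℂ {v | ∃ M ∈ Vk ι d k, v = M.mulVec ψ}

/-- `dim W_k^ψ`. -/
def dimW {ι : Type*} [Fintype ι] [DecidableEq ι] {d : ℕ} (ψ : (ι → Fin d) → ℂ) (k : ℕ) : ℕ :=
  Module.finrank ℂ (Wk ψ k)

/-- `dim ΔW_k^ψ = dim W_k^ψ − dim W_{k−1}^ψ` (with `W_{−1} = 0`), as an integer. -/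
def deltaDimW {ι : Type*} [Fintype ι] [DecidableEq ι] {d : ℕ} (ψ : (ι → Fin d) → ℂ)
    (k : ℕ) : ℤ :=
  (dimW ψ k : ℤ) - if k = 0 then 0 else (dimW ψ (k - 1) : ℤ)

/-- The entanglement polynomial `f(ψ) = Σ_k (dim ΔW_k^ψ) x^k ∈ ℤ[x]`. -/
def entPoly {ι : Type*} [Fintype ι] [DecidableEq ι] {d : ℕ} (ψ : (ι → Fin d) → ℂ) :
    Polynomial ℤ :=
  ∑ k ∈ Finset.range (Fintype.card ι + 1), Polynomial.C (deltaDimW ψ k) * Polynomial.X ^ k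

/-- Tensor product of states of two disjoint sets of qudits. -/
def tens {ι₁ ι₂ : Type*} {d : ℕ} (ψ : (ι₁ → Fin d) → ℂ) (φ : (ι₂ → Fin d) → ℂ) :
    (ι₁ ⊕ ι₂ → Fin d) → ℂ :=
  fun x => ψ (fun i => x (Sum.inl i)) * φ (fun j => x (Sum.inr j))

end

/-- `N_χ`: the minimal `k` such that `W_{k+1}^χ = W_k^χ` (the degree of the entanglement
polynomial). -/
noncomputable def Nstab {ι : Type*} [Fintype ι] [DecidableEq ι] {d : ℕ}
    (χ : (ι → Fin d) → ℂ) : ℕ :=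
  sInf {k : ℕ | Wk χ (k + 1) = Wk χ k}


set_option linter.unusedSectionVars false

noncomputable section
namespace EntPolyAux
open Matrix

section Single
variable {ι : Type*} [Fintype ι] [DecidableEq ι] {d : ℕ}



variable {ι : Type*} [Fintype ι] [DecidableEq ι] {d : ℕ}

/-- patch: `x` on `B`, `z` off `B`. -/
def patchF (B : Finset ι) (x z : ι → Fin d) : ι → Fin d := fun i => if i ∈ B then x i else z i

@[simp] lemma patchF_self (B : Finset ι) (x : ι → Fin d) : patchF B x x = x := by
  funext i; simp [patchF]

lemma patchF_mem {B : Finset ι} {x z : ι → Fin d} {i : ι} (h : i ∈ B) :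
    patchF B x z i = x i := by simp [patchF, h]

lemma patchF_not_mem {B : Finset ι} {x z : ι → Fin d} {i : ι} (h : i ∉ B) :
    patchF B x z i = z i := by simp [patchF, h]

/-- matrix unit supported on `B`. -/
def unitM (B : Finset ι) (p q : ι → Fin d) : Matrix (ι → Fin d) (ι → Fin d) ℂ :=
  fun x y => if (∀ i ∈ B, x i = p i) ∧ (∀ i ∈ B, y i = q i) ∧ (∀ i ∉ B, x i = y i)
    then 1 else 0

lemma supportedOn_unitM (B : Finset ι) (p q : ι → Fin d) : SupportedOn d B (unitM B p q) := by
  constructor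
  · rintro x y ⟨i, hi, hne⟩
    apply if_neg
    rintro ⟨-, -, h3⟩
    exact hne (h3 i hi)
  · intro x y z z'
    unfold unitM
    apply if_congr _ rfl rfl
    constructor <;> rintro ⟨h1, h2, h3⟩ <;>
      exact ⟨fun i hi => by simpa [hi] using h1 i hi,
        fun i hi => by simpa [hi] using h2 i hi,
        fun i hi => by simp [hi]⟩

lemma supportedOn_one (B : Finset ι) : SupportedOn d B (1 : Matrix (ι → Fin d) (ι → Fin d) ℂ) := by
  constructor
  · rintro x y ⟨i, hi, hne⟩
    exact Matrix.one_apply_ne (fun h => hne (congrFun h i))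
  · intro x y z z'
    by_cases h : ∀ i ∈ B, x i = y i
    · have e1 : ∀ w : ι → Fin d, (fun i => if i ∈ B then x i else w i) =
          (fun i => if i ∈ B then y i else w i) := by
        intro w; funext i; by_cases hi : i ∈ B <;> simp [hi, h i]
      rw [e1 z, e1 z', Matrix.one_apply_eq, Matrix.one_apply_eq]
    · push_neg at h
      obtain ⟨i, hi, hne⟩ := h
      rw [Matrix.one_apply_ne, Matrix.one_apply_ne] <;>
        · intro hcon
          exact hne (by simpa [hi] using congrFun hcon i)

lemma supported_eq {B : Finset ι} {M : Matrix (ι → Fin d) (ι → Fin d) ℂ}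
    (h : SupportedOn d B M) (z₀ : ι → Fin d) (x y : ι → Fin d) :
    M x y = if (∀ i ∉ B, x i = y i) then M (patchF B x z₀) (patchF B y z₀) else 0 := by
  by_cases hc : ∀ i ∉ B, x i = y i
  · rw [if_pos hc]
    have e1 : x = fun i => if i ∈ B then x i else x i := by funext i; simp
    have e2 : y = fun i => if i ∈ B then y i else x i := by
      funext i; by_cases hi : i ∈ B
      · simp [hi]
      · simp [hi, hc i hi]
    calc M x y = M (fun i => if i ∈ B then x i else x i) (fun i => if i ∈ B then y i else x i) := by
          rw [← e1, ← e2]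
      _ = M (fun i => if i ∈ B then x i else z₀ i) (fun i => if i ∈ B then y i else z₀ i) :=
          h.2 x y x z₀
      _ = M (patchF B x z₀) (patchF B y z₀) := rfl
  · rw [if_neg hc]
    push_neg at hc
    exact h.1 x y hc

/-- configurations pinned to `z₀` off `B`. -/
def fixSet (B : Finset ι) (z₀ : ι → Fin d) : Finset (ι → Fin d) :=
  Finset.univ.filter (fun p => ∀ i ∉ B, p i = z₀ i)

lemma patchF_mem_fixSet (B : Finset ι) (z₀ x : ι → Fin d) : patchF B x z₀ ∈ fixSet B z₀ := by
  simp only [fixSet, Finset.mem_filter, Finset.mem_univ, true_and]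
  intro i hi; exact patchF_not_mem hi

lemma unit_decomp {B : Finset ι} {M : Matrix (ι → Fin d) (ι → Fin d) ℂ}
    (h : SupportedOn d B M) (z₀ : ι → Fin d) :
    M = ∑ p ∈ fixSet B z₀, ∑ q ∈ fixSet B z₀, M p q • unitM B p q := by
  funext x y
  have hs : (∑ p ∈ fixSet B z₀, ∑ q ∈ fixSet B z₀, M p q • unitM B p q) x y
      = ∑ p ∈ fixSet B z₀, ∑ q ∈ fixSet B z₀, M p q * unitM B p q x y := by
    rw [Matrix.sum_apply]
    refine Finset.sum_congr rfl fun p _ => ?_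
    rw [Matrix.sum_apply]
    rfl
  rw [hs]
  rw [Finset.sum_eq_single (patchF B x z₀)]
  · rw [Finset.sum_eq_single (patchF B y z₀)]
    · rw [supported_eq h z₀ x y]
      unfold unitM
      by_cases hc : ∀ i ∉ B, x i = y i
      · rw [if_pos hc, if_pos, mul_one]
        exact ⟨fun i hi => (patchF_mem hi).symm, fun i hi => (patchF_mem hi).symm, hc⟩
      · rw [if_neg hc, if_neg, mul_zero]
        rintro ⟨-, -, h3⟩; exact hc h3
    · intro q hq hne
      rw [unitM]
      rw [if_neg, mul_zero]
      rintro ⟨-, h2, -⟩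
      apply hne
      funext i
      by_cases hi : i ∈ B
      · rw [patchF_mem hi, h2 i hi]
      · rw [patchF_not_mem hi]
        simp only [fixSet, Finset.mem_filter] at hq
        exact hq.2 i hi
    · intro hq; exact absurd (patchF_mem_fixSet B z₀ y) hq
  · intro p hp hne
    apply Finset.sum_eq_zero
    intro q hq
    rw [unitM]
    rw [if_neg, mul_zero]
    rintro ⟨h1, -, -⟩
    apply hne
    funext i
    by_cases hi : i ∈ B
    · rw [patchF_mem hi, h1 i hi]
    · rw [patchF_not_mem hi]
      simp only [fixSet, Finset.mem_filter] at hp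
      exact hp.2 i hi
  · intro hp; exact absurd (patchF_mem_fixSet B z₀ x) hp




lemma unitM_mul_apply (B C : Finset ι) (p q r s x y : ι → Fin d) :
    (unitM B p q * unitM C r s) x y =
      if (∀ i ∈ B, x i = p i) ∧ (∀ i ∈ C, patchF B q x i = r i) ∧ (∀ i ∈ C, y i = s i) ∧
          (∀ i ∉ C, patchF B q x i = y i) then 1 else 0 := by
  rw [Matrix.mul_apply]
  rw [Finset.sum_eq_single (patchF B q x)]
  · unfold unitM
    by_cases hc : (∀ i ∈ B, x i = p i) ∧ (∀ i ∈ C, patchF B q x i = r i) ∧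
        (∀ i ∈ C, y i = s i) ∧ (∀ i ∉ C, patchF B q x i = y i)
    · rw [if_pos hc, if_pos, if_pos, mul_one]
      · exact ⟨hc.2.1, hc.2.2.1, hc.2.2.2⟩
      · exact ⟨hc.1, fun i hi => patchF_mem hi, fun i hi => (patchF_not_mem hi).symm⟩
    · rw [if_neg hc]
      by_cases h1 : ∀ i ∈ B, x i = p i
      · rw [if_pos ⟨h1, fun i hi => patchF_mem hi, fun i hi => (patchF_not_mem hi).symm⟩,
          one_mul, if_neg]
        rintro ⟨ha, hb, hcc⟩
        exact hc ⟨h1, ha, hb, hcc⟩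
      · rw [if_neg, zero_mul]
        rintro ⟨ha, -, -⟩
        exact h1 ha
  · intro u hu hne
    unfold unitM
    rcases eq_or_ne (unitM B p q x u) 0 with h | h
    · rw [unitM] at h; rw [h, zero_mul]
    · exfalso
      apply hne
      rw [unitM] at h
      have hcond := of_not_not (fun hn => h (if_neg hn))
      funext i
      by_cases hi : i ∈ B
      · rw [patchF_mem hi, hcond.2.1 i hi]
      · rw [patchF_not_mem hi, hcond.2.2 i hi]
  · intro hu; exact absurd (Finset.mem_univ _) hu

lemma supportedOn_unitM_mul (B C : Finset ι) (p q r s : ι → Fin d) :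
    SupportedOn d (B ∪ C) (unitM B p q * unitM C r s) := by
  constructor
  · rintro x y ⟨i, hi, hne⟩
    rw [unitM_mul_apply]
    apply if_neg
    rintro ⟨-, -, -, h4⟩
    rw [Finset.mem_union, not_or] at hi
    apply hne
    rw [← h4 i hi.2, patchF_not_mem hi.1]
  · intro x y z z'
    rw [unitM_mul_apply, unitM_mul_apply]
    apply if_congr _ rfl rfl
    have hB : ∀ i ∈ B, i ∈ B ∪ C := fun i hi => Finset.mem_union_left _ hi
    have hC : ∀ i ∈ C, i ∈ B ∪ C := fun i hi => Finset.mem_union_right _ hi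
    constructor <;> rintro ⟨h1, h2, h3, h4⟩ <;> refine ⟨?_, ?_, ?_, ?_⟩
    · intro i hi; simpa [hB i hi] using h1 i hi
    · intro i hi
      have := h2 i hi
      by_cases hib : i ∈ B
      · simpa [patchF, hib] using this
      · simpa [patchF, hib, hC i hi] using this
    · intro i hi; simpa [hC i hi] using h3 i hi
    · intro i hi
      by_cases hib : i ∈ B
      · have := h4 i hi
        simpa [patchF, hib, hB i hib] using this
      · have hid : i ∉ B ∪ C := by simp [hib, hi]
        simp [patchF, hib, hid]
    · intro i hi; simpa [hB i hi] using h1 i hi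
    · intro i hi
      have := h2 i hi
      by_cases hib : i ∈ B
      · simpa [patchF, hib] using this
      · simpa [patchF, hib, hC i hi] using this
    · intro i hi; simpa [hC i hi] using h3 i hi
    · intro i hi
      by_cases hib : i ∈ B
      · have := h4 i hi
        simpa [patchF, hib, hB i hib] using this
      · have hid : i ∉ B ∪ C := by simp [hib, hi]
        simp [patchF, hib, hid]

lemma unitM_singleton_mul {B : Finset ι} {j : ι} (hj : j ∈ B) (p q : ι → Fin d) :
    unitM B p q = unitM {j} p q * unitM (B \ {j}) p q := by
  funext x y
  rw [unitM_mul_apply, unitM]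
  apply if_congr _ rfl rfl
  constructor
  · rintro ⟨h1, h2, h3⟩
    refine ⟨fun i hi => h1 i (by simpa using (Finset.mem_singleton.mp hi) ▸ hj), ?_, ?_, ?_⟩
    · intro i hi
      rw [Finset.mem_sdiff, Finset.mem_singleton] at hi
      rw [patchF_not_mem (by simpa using hi.2), h1 i hi.1]
    · intro i hi
      rw [Finset.mem_sdiff] at hi
      exact h2 i hi.1
    · intro i hi
      rw [Finset.mem_sdiff, Finset.mem_singleton, not_and, not_not] at hi
      by_cases hib : i ∈ B
      · have hij : i = j := hi hib
        rw [patchF_mem (by simp [hij]), (h2 i hib).symm]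
      · rw [patchF_not_mem (by simp; rintro rfl; exact hib hj), h3 i hib]
  · rintro ⟨h1, h2, h3, h4⟩
    refine ⟨?_, ?_, ?_⟩
    · intro i hi
      by_cases hij : i = j
      · exact h1 i (by simp [hij])
      · have := h2 i (Finset.mem_sdiff.mpr ⟨hi, by simp [hij]⟩)
        rwa [patchF_not_mem (by simp [hij])] at this
    · intro i hi
      by_cases hij : i = j
      · have := h4 i (by simp [hij])
        rw [patchF_mem (by simp [hij])] at this
        exact this.symm
      · exact h3 i (Finset.mem_sdiff.mpr ⟨hi, by simp [hij]⟩)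
    · intro i hi
      have hij : i ≠ j := fun h => hi (h ▸ hj)
      have := h4 i (by simp [hij, hi])
      rwa [patchF_not_mem (by simp [hij])] at this



lemma mem_Vk {B : Finset ι} {M : Matrix (ι → Fin d) (ι → Fin d) ℂ} {k : ℕ}
    (h : SupportedOn d B M) (hk : B.card ≤ k) : M ∈ Vk ι d k :=
  Submodule.subset_span ⟨B, hk, h⟩

lemma Vk_mono {k k' : ℕ} (h : k ≤ k') : Vk ι d k ≤ Vk ι d k' :=
  Submodule.span_mono (fun _ => fun ⟨B, hB, hs⟩ => ⟨B, hB.trans h, hs⟩)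

lemma Wk_mono {χ : (ι → Fin d) → ℂ} {k k' : ℕ} (h : k ≤ k') : Wk χ k ≤ Wk χ k' :=
  Submodule.span_mono (fun _ => fun ⟨M, hM, hv⟩ => ⟨M, Vk_mono h hM, hv⟩)

lemma sum_mulVec {α : Type*} (s : Finset α) (A : α → Matrix (ι → Fin d) (ι → Fin d) ℂ)
    (v : (ι → Fin d) → ℂ) :
    (∑ a ∈ s, A a).mulVec v = ∑ a ∈ s, (A a).mulVec v := by
  funext x
  rw [Finset.sum_apply]
  simp only [Matrix.mulVec, dotProduct, Finset.sum_apply]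
  rw [Finset.sum_comm]
  refine Finset.sum_congr rfl fun y _ => ?_
  have e : (∑ a ∈ s, A a) x y = ∑ a ∈ s, A a x y := by
    rw [Matrix.sum_apply]
  rw [e, Finset.sum_mul]

lemma mulVec_mem_span {χ : (ι → Fin d) → ℂ} {k : ℕ} {M : Matrix (ι → Fin d) (ι → Fin d) ℂ}
    (hM : M ∈ Vk ι d k) : M.mulVec χ ∈ Wk χ k :=
  Submodule.subset_span ⟨M, hM, rfl⟩

lemma mul_mem_Vk (z₀ : ι → Fin d) {A : Finset ι} {E M : Matrix (ι → Fin d) (ι → Fin d) ℂ}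
    {k : ℕ} (hE : SupportedOn d A E) (hM : M ∈ Vk ι d k) : E * M ∈ Vk ι d (A.card + k) := by
  induction hM using Submodule.span_induction with
  | mem N hN =>
    obtain ⟨C, hC, hsup⟩ := hN
    rw [unit_decomp hE z₀, unit_decomp hsup z₀]
    rw [Finset.sum_mul]
    apply Submodule.sum_mem
    intro p _
    rw [Finset.sum_mul]
    apply Submodule.sum_mem
    intro q _
    rw [Finset.mul_sum]
    apply Submodule.sum_mem
    intro r _
    rw [Finset.mul_sum]
    apply Submodule.sum_mem
    intro s _
    rw [smul_mul_assoc, mul_smul_comm]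
    apply Submodule.smul_mem
    apply Submodule.smul_mem
    apply mem_Vk (supportedOn_unitM_mul A C p q r s)
    calc (A ∪ C).card ≤ A.card + C.card := Finset.card_union_le A C
      _ ≤ A.card + k := by omega
  | zero => rw [mul_zero]; exact Submodule.zero_mem _
  | add x y hx hy ihx ihy => rw [mul_add]; exact Submodule.add_mem _ ihx ihy
  | smul c x hx ihx => rw [mul_smul_comm]; exact Submodule.smul_mem _ c ihx

lemma mulVec_mem_Wk (z₀ : ι → Fin d) {χ : (ι → Fin d) → ℂ} {A : Finset ι}
    {E : Matrix (ι → Fin d) (ι → Fin d) ℂ} (hE : SupportedOn d A E) {k : ℕ}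
    {w : (ι → Fin d) → ℂ} (hw : w ∈ Wk χ k) : E.mulVec w ∈ Wk χ (A.card + k) := by
  induction hw using Submodule.span_induction with
  | mem v hv =>
    obtain ⟨P, hP, rfl⟩ := hv
    rw [Matrix.mulVec_mulVec]
    exact mulVec_mem_span (mul_mem_Vk z₀ hE hP)
  | zero => rw [Matrix.mulVec_zero]; exact Submodule.zero_mem _
  | add x y hx hy ihx ihy => rw [Matrix.mulVec_add]; exact Submodule.add_mem _ ihx ihy
  | smul c x hx ihx => rw [Matrix.mulVec_smul]; exact Submodule.smul_mem _ c ihx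

lemma supportedOn_univ (M : Matrix (ι → Fin d) (ι → Fin d) ℂ) :
    SupportedOn d (Finset.univ : Finset ι) M := by
  constructor
  · rintro x y ⟨i, hi, -⟩; exact absurd (Finset.mem_univ i) hi
  · intro x y z z'
    have e : ∀ w w' : ι → Fin d, (fun i => if i ∈ (Finset.univ : Finset ι) then w i else w' i) = w :=
      fun w w' => by funext i; simp
    rw [e, e, e, e]

lemma Wk_card_le {χ : (ι → Fin d) → ℂ} {k : ℕ} (hk : Fintype.card ι ≤ k) :
    Wk χ k ≤ Wk χ (Fintype.card ι) := by
  apply Submodule.span_le.mpr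
  rintro v ⟨M, hM, rfl⟩
  exact mulVec_mem_span (mem_Vk (supportedOn_univ M) (le_of_eq (Finset.card_univ)))

/-- the stabilization set is nonempty -/
lemma stabSet_nonempty (χ : (ι → Fin d) → ℂ) :
    {k : ℕ | Wk χ (k + 1) = Wk χ k}.Nonempty := by
  refine ⟨Fintype.card ι, le_antisymm (Wk_card_le (by omega)) (Wk_mono (by omega))⟩

lemma Wk_stab_step (z₀ : ι → Fin d) {χ : (ι → Fin d) → ℂ} {k : ℕ}
    (h : Wk χ (k + 1) = Wk χ k) : Wk χ (k + 2) = Wk χ (k + 1) := by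
  refine le_antisymm ?_ (Wk_mono (by omega))
  apply Submodule.span_le.mpr
  rintro v ⟨M, hM, rfl⟩
  have key : ∀ N ∈ Vk ι d (k + 2), N.mulVec χ ∈ Wk χ (k + 1) := by
    intro N hN
    induction hN using Submodule.span_induction with
    | mem N hN =>
      obtain ⟨B, hB, hsup⟩ := hN
      by_cases hcard : B.card ≤ k + 1
      · exact mulVec_mem_span (mem_Vk hsup hcard)
      · have hpos : 0 < B.card := by omega
        obtain ⟨j, hj⟩ := Finset.card_pos.mp hpos
        rw [unit_decomp hsup z₀]
        rw [sum_mulVec]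
        apply Submodule.sum_mem
        intro p _
        rw [sum_mulVec]
        apply Submodule.sum_mem
        intro q _
        rw [Matrix.smul_mulVec]
        apply Submodule.smul_mem
        rw [unitM_singleton_mul hj p q, ← Matrix.mulVec_mulVec]
        have hinner : (unitM (B \ {j}) p q).mulVec χ ∈ Wk χ k := by
          rw [← h]
          refine mulVec_mem_span (mem_Vk (supportedOn_unitM _ p q) ?_)
          have hsub : ({j} : Finset ι) ⊆ B := by simpa using hj
          have := Finset.card_sdiff_of_subset hsub
          rw [Finset.card_singleton] at this
          omega
        have h2 := mulVec_mem_Wk z₀ (supportedOn_unitM {j} p q) hinner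
        rw [Finset.card_singleton] at h2
        rwa [Nat.add_comm] at h2
    | zero => rw [Matrix.zero_mulVec]; exact Submodule.zero_mem _
    | add x y hx hy ihx ihy => rw [Matrix.add_mulVec]; exact Submodule.add_mem _ ihx ihy
    | smul c x hx ihx => rw [Matrix.smul_mulVec]; exact Submodule.smul_mem _ c ihx
  exact key M hM



lemma Nstab_spec (χ : (ι → Fin d) → ℂ) : Wk χ (Nstab χ + 1) = Wk χ (Nstab χ) :=
  Nat.sInf_mem (stabSet_nonempty χ)

lemma stab_forward (z₀ : ι → Fin d) (χ : (ι → Fin d) → ℂ) :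
    ∀ m, Nstab χ ≤ m → Wk χ (m + 1) = Wk χ m := by
  intro m hm
  induction m, hm using Nat.le_induction with
  | base => exact Nstab_spec χ
  | succ m hm ih => exact Wk_stab_step z₀ ih

lemma Wk_stab_ge (z₀ : ι → Fin d) (χ : (ι → Fin d) → ℂ) {m : ℕ} (hm : Nstab χ ≤ m) :
    Wk χ m = Wk χ (Nstab χ) := by
  induction m, hm using Nat.le_induction with
  | base => rfl
  | succ m hm ih => rw [stab_forward z₀ χ m hm, ih]

lemma Wk_ne_of_lt {χ : (ι → Fin d) → ℂ} {k : ℕ} (h : k < Nstab χ) :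
    Wk χ (k + 1) ≠ Wk χ k :=
  Nat.notMem_of_lt_sInf h

set_option maxHeartbeats 1000000 in
lemma mem_Wk_self (χ : (ι → Fin d) → ℂ) (k : ℕ) : χ ∈ Wk χ k := by
  have h := mulVec_mem_span (χ := χ) (k := k) (mem_Vk (supportedOn_one (∅ : Finset ι)) (by simp))
  rwa [Matrix.one_mulVec] at h


end Single

section Double
variable {ι₁ ι₂ : Type*} [Fintype ι₁] [Fintype ι₂] [DecidableEq ι₁] [DecidableEq ι₂] {d : ℕ}


lemma tens_add_left (a a' : (ι₁ → Fin d) → ℂ) (b : (ι₂ → Fin d) → ℂ) :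
    tens (a + a') b = tens a b + tens a' b := by
  funext x; simp [tens, add_mul]

lemma tens_add_right (a : (ι₁ → Fin d) → ℂ) (b b' : (ι₂ → Fin d) → ℂ) :
    tens a (b + b') = tens a b + tens a b' := by
  funext x; simp [tens, mul_add]

lemma tens_smul_left (c : ℂ) (a : (ι₁ → Fin d) → ℂ) (b : (ι₂ → Fin d) → ℂ) :
    tens (c • a) b = c • tens a b := by
  funext x; simp [tens]; ring

lemma tens_smul_right (c : ℂ) (a : (ι₁ → Fin d) → ℂ) (b : (ι₂ → Fin d) → ℂ) :
    tens a (c • b) = c • tens a b := by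
  funext x; simp [tens]; ring

lemma tens_zero_left (b : (ι₂ → Fin d) → ℂ) : tens (0 : (ι₁ → Fin d) → ℂ) b = 0 := by
  funext x; simp [tens]

lemma tens_zero_right (a : (ι₁ → Fin d) → ℂ) : tens a (0 : (ι₂ → Fin d) → ℂ) = 0 := by
  funext x; simp [tens]

/-- Kronecker-type product of matrices on two qudit registers. -/
def kron (M₁ : Matrix (ι₁ → Fin d) (ι₁ → Fin d) ℂ) (M₂ : Matrix (ι₂ → Fin d) (ι₂ → Fin d) ℂ) :
    Matrix (ι₁ ⊕ ι₂ → Fin d) (ι₁ ⊕ ι₂ → Fin d) ℂ :=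
  fun x y => M₁ (fun i => x (Sum.inl i)) (fun i => y (Sum.inl i)) *
    M₂ (fun j => x (Sum.inr j)) (fun j => y (Sum.inr j))

lemma kron_mulVec (M₁ : Matrix (ι₁ → Fin d) (ι₁ → Fin d) ℂ)
    (M₂ : Matrix (ι₂ → Fin d) (ι₂ → Fin d) ℂ) (ψ : (ι₁ → Fin d) → ℂ) (φ : (ι₂ → Fin d) → ℂ) :
    (kron M₁ M₂).mulVec (tens ψ φ) = tens (M₁.mulVec ψ) (M₂.mulVec φ) := by
  funext x
  show ∑ y : ι₁ ⊕ ι₂ → Fin d, kron M₁ M₂ x y * tens ψ φ y =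
    (∑ a, M₁ (fun i => x (Sum.inl i)) a * ψ a) * (∑ b, M₂ (fun j => x (Sum.inr j)) b * φ b)
  rw [Fintype.sum_mul_sum]
  rw [← Equiv.sum_comp (Equiv.sumArrowEquivProdArrow ι₁ ι₂ (Fin d)).symm
    (fun y => kron M₁ M₂ x y * tens ψ φ y)]
  rw [Fintype.sum_prod_type]
  refine Finset.sum_congr rfl fun a _ => Finset.sum_congr rfl fun b _ => ?_
  show kron M₁ M₂ x (Sum.elim a b) * tens ψ φ (Sum.elim a b) = _
  simp only [kron, tens, Sum.elim_inl, Sum.elim_inr]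
  ring

lemma supportedOn_kron {B₁ : Finset ι₁} {B₂ : Finset ι₂}
    {M₁ : Matrix (ι₁ → Fin d) (ι₁ → Fin d) ℂ} {M₂ : Matrix (ι₂ → Fin d) (ι₂ → Fin d) ℂ}
    (h₁ : SupportedOn d B₁ M₁) (h₂ : SupportedOn d B₂ M₂) :
    SupportedOn d (B₁.disjSum B₂) (kron M₁ M₂) := by
  constructor
  · rintro x y ⟨c, hc, hne⟩
    cases c with
    | inl i =>
      rw [Finset.inl_mem_disjSum] at hc
      have := h₁.1 (fun i => x (Sum.inl i)) (fun i => y (Sum.inl i)) ⟨i, hc, hne⟩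
      rw [kron, this, zero_mul]
    | inr j =>
      rw [Finset.inr_mem_disjSum] at hc
      have := h₂.1 (fun j => x (Sum.inr j)) (fun j => y (Sum.inr j)) ⟨j, hc, hne⟩
      rw [kron, this, mul_zero]
  · intro x y z z'
    show M₁ _ _ * M₂ _ _ = M₁ _ _ * M₂ _ _
    simp only [Finset.inl_mem_disjSum, Finset.inr_mem_disjSum]
    exact congrArg₂ (· * ·) (h₁.2 _ _ _ _) (h₂.2 _ _ _ _)

lemma unitM_eq_kron (B : Finset (ι₁ ⊕ ι₂)) (p q : ι₁ ⊕ ι₂ → Fin d) :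
    unitM B p q = kron (unitM B.toLeft (fun i => p (Sum.inl i)) (fun i => q (Sum.inl i)))
      (unitM B.toRight (fun j => p (Sum.inr j)) (fun j => q (Sum.inr j))) := by
  funext x y
  simp only [unitM, kron, ite_zero_mul_ite_zero, one_mul]
  apply if_congr _ rfl rfl
  constructor
  · rintro ⟨h1, h2, h3⟩
    refine ⟨⟨fun i hi => h1 _ (Finset.mem_toLeft.mp hi), fun i hi => h2 _ (Finset.mem_toLeft.mp hi),
      fun i hi => h3 _ (fun hc => hi (Finset.mem_toLeft.mpr hc))⟩,
      fun j hj => h1 _ (Finset.mem_toRight.mp hj), fun j hj => h2 _ (Finset.mem_toRight.mp hj),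
      fun j hj => h3 _ (fun hc => hj (Finset.mem_toRight.mpr hc))⟩
  · rintro ⟨⟨h1l, h2l, h3l⟩, h1r, h2r, h3r⟩
    refine ⟨?_, ?_, ?_⟩
    · rintro (i | j) hc
      · exact h1l i (Finset.mem_toLeft.mpr hc)
      · exact h1r j (Finset.mem_toRight.mpr hc)
    · rintro (i | j) hc
      · exact h2l i (Finset.mem_toLeft.mpr hc)
      · exact h2r j (Finset.mem_toRight.mpr hc)
    · rintro (i | j) hc
      · exact h3l i (fun hm => hc (Finset.mem_toLeft.mp hm))
      · exact h3r j (fun hm => hc (Finset.mem_toRight.mp hm))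

lemma kron_mem_Vk {M₁ : Matrix (ι₁ → Fin d) (ι₁ → Fin d) ℂ}
    {M₂ : Matrix (ι₂ → Fin d) (ι₂ → Fin d) ℂ} {l m : ℕ}
    (h₁ : M₁ ∈ Vk ι₁ d l) (h₂ : M₂ ∈ Vk ι₂ d m) :
    kron M₁ M₂ ∈ Vk (ι₁ ⊕ ι₂) d (l + m) := by
  induction h₁ using Submodule.span_induction with
  | mem N hN =>
    induction h₂ using Submodule.span_induction with
    | mem P hP =>
      obtain ⟨B₁, hB₁, hs₁⟩ := hN
      obtain ⟨B₂, hB₂, hs₂⟩ := hP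
      apply mem_Vk (supportedOn_kron hs₁ hs₂)
      rw [Finset.card_disjSum]
      omega
    | zero =>
      have : kron N (0 : Matrix (ι₂ → Fin d) (ι₂ → Fin d) ℂ) = 0 := by funext x y; simp [kron]
      rw [this]; exact Submodule.zero_mem _
    | add u v hu hv ihu ihv =>
      have : kron N (u + v) = kron N u + kron N v := by
        funext x y; simp [kron, mul_add]
      rw [this]; exact Submodule.add_mem _ ihu ihv
    | smul c u hu ihu =>
      have : kron N (c • u) = c • kron N u := by
        funext x y; simp [kron]; ring
      rw [this]; exact Submodule.smul_mem _ c ihu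
  | zero =>
    have : kron (0 : Matrix (ι₁ → Fin d) (ι₁ → Fin d) ℂ) M₂ = 0 := by funext x y; simp [kron]
    rw [this]; exact Submodule.zero_mem _
  | add u v hu hv ihu ihv =>
    have : kron (u + v) M₂ = kron u M₂ + kron v M₂ := by
      funext x y; simp [kron, add_mul]
    rw [this]; exact Submodule.add_mem _ ihu ihv
  | smul c u hu ihu =>
    have : kron (c • u) M₂ = c • kron u M₂ := by
      funext x y; simp [kron]; ring
    rw [this]; exact Submodule.smul_mem _ c ihu

lemma tens_mem_Wk_gen {ψ : (ι₁ → Fin d) → ℂ} {φ : (ι₂ → Fin d) → ℂ} {l m : ℕ}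
    {M₁ : Matrix (ι₁ → Fin d) (ι₁ → Fin d) ℂ} (hM₁ : M₁ ∈ Vk ι₁ d l)
    {b : (ι₂ → Fin d) → ℂ} (hb : b ∈ Wk φ m) :
    tens (M₁.mulVec ψ) b ∈ Wk (tens ψ φ) (l + m) := by
  induction hb using Submodule.span_induction with
  | mem v hv =>
    obtain ⟨M₂, hM₂, rfl⟩ := hv
    rw [← kron_mulVec]
    exact mulVec_mem_span (kron_mem_Vk hM₁ hM₂)
  | zero => rw [tens_zero_right]; exact Submodule.zero_mem _
  | add u v hu hv ihu ihv => rw [tens_add_right]; exact Submodule.add_mem _ ihu ihv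
  | smul c u hu ihu => rw [tens_smul_right]; exact Submodule.smul_mem _ c ihu

lemma tens_mem_Wk {ψ : (ι₁ → Fin d) → ℂ} {φ : (ι₂ → Fin d) → ℂ} {l m : ℕ}
    {a : (ι₁ → Fin d) → ℂ} (ha : a ∈ Wk ψ l)
    {b : (ι₂ → Fin d) → ℂ} (hb : b ∈ Wk φ m) :
    tens a b ∈ Wk (tens ψ φ) (l + m) := by
  induction ha using Submodule.span_induction with
  | mem v hv =>
    obtain ⟨M₁, hM₁, rfl⟩ := hv
    exact tens_mem_Wk_gen hM₁ hb
  | zero => rw [tens_zero_left]; exact Submodule.zero_mem _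
  | add u v hu hv ihu ihv => rw [tens_add_left]; exact Submodule.add_mem _ ihu ihv
  | smul c u hu ihu => rw [tens_smul_left]; exact Submodule.smul_mem _ c ihu



/-- `Σ_{l+m ≤ k} W_l^ψ ⊗ W_m^φ`. -/
def SS (ψ : (ι₁ → Fin d) → ℂ) (φ : (ι₂ → Fin d) → ℂ) (k : ℕ) :
    Submodule ℂ ((ι₁ ⊕ ι₂ → Fin d) → ℂ) :=
  Submodule.span ℂ {v | ∃ l m : ℕ, l + m ≤ k ∧ ∃ a ∈ Wk ψ l, ∃ b ∈ Wk φ m, v = tens a b}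

lemma SS_le_Wk (ψ : (ι₁ → Fin d) → ℂ) (φ : (ι₂ → Fin d) → ℂ) (k : ℕ) :
    SS ψ φ k ≤ Wk (tens ψ φ) k := by
  apply Submodule.span_le.mpr
  rintro v ⟨l, m, hlm, a, ha, b, hb, rfl⟩
  exact Wk_mono hlm (tens_mem_Wk ha hb)

lemma Wk_le_SS (ψ : (ι₁ → Fin d) → ℂ) (φ : (ι₂ → Fin d) → ℂ) (k : ℕ)
    (z₁ : ι₁ → Fin d) (z₂ : ι₂ → Fin d) :
    Wk (tens ψ φ) k ≤ SS ψ φ k := by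
  apply Submodule.span_le.mpr
  rintro v ⟨M, hM, rfl⟩
  induction hM using Submodule.span_induction with
  | mem N hN =>
    obtain ⟨B, hB, hsup⟩ := hN
    rw [unit_decomp hsup (Sum.elim z₁ z₂), sum_mulVec]
    apply Submodule.sum_mem
    intro p _
    rw [sum_mulVec]
    apply Submodule.sum_mem
    intro q _
    rw [Matrix.smul_mulVec]
    apply Submodule.smul_mem
    rw [unitM_eq_kron, kron_mulVec]
    apply Submodule.subset_span
    refine ⟨B.toLeft.card, B.toRight.card, ?_, _, ?_, _, ?_, rfl⟩
    · rw [Finset.card_toLeft_add_card_toRight]; exact hB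
    · exact mulVec_mem_span (mem_Vk (supportedOn_unitM _ _ _) le_rfl)
    · exact mulVec_mem_span (mem_Vk (supportedOn_unitM _ _ _) le_rfl)
  | zero => rw [Matrix.zero_mulVec]; exact Submodule.zero_mem _
  | add x y hx hy ihx ihy => rw [Matrix.add_mulVec]; exact Submodule.add_mem _ ihx ihy
  | smul c x hx ihx => rw [Matrix.smul_mulVec]; exact Submodule.smul_mem _ c ihx

lemma Wk_tens_eq (ψ : (ι₁ → Fin d) → ℂ) (φ : (ι₂ → Fin d) → ℂ) (k : ℕ)
    (z₁ : ι₁ → Fin d) (z₂ : ι₂ → Fin d) :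
    Wk (tens ψ φ) k = SS ψ φ k :=
  le_antisymm (Wk_le_SS ψ φ k z₁ z₂) (SS_le_Wk ψ φ k)

/-- extract the `ι₁`-register by contracting with a functional on the second register. -/
def contractR (g : ((ι₂ → Fin d) → ℂ) →ₗ[ℂ] ℂ) :
    ((ι₁ ⊕ ι₂ → Fin d) → ℂ) →ₗ[ℂ] ((ι₁ → Fin d) → ℂ) where
  toFun χ := fun a => g (fun b => χ (Sum.elim a b))
  map_add' χ χ' := by
    funext a
    have e : (fun b => (χ + χ') (Sum.elim a b)) =
        (fun b => χ (Sum.elim a b)) + (fun b => χ' (Sum.elim a b)) := rfl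
    show g _ = g _ + g _
    rw [e, map_add]
  map_smul' c χ := by
    funext a
    have e : (fun b => (c • χ) (Sum.elim a b)) = c • (fun b => χ (Sum.elim a b)) := rfl
    show g _ = c • g _
    rw [e, _root_.map_smul]

lemma contractR_tens (g : ((ι₂ → Fin d) → ℂ) →ₗ[ℂ] ℂ)
    (v : (ι₁ → Fin d) → ℂ) (w : (ι₂ → Fin d) → ℂ) :
    contractR g (tens v w) = g w • v := by
  funext a
  show g (fun b => tens v w (Sum.elim a b)) = g w * v a
  have e : (fun b => tens v w (Sum.elim a b)) = v a • w := by
    funext b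
    show v a * w b = v a * w b
    rfl
  rw [e, _root_.map_smul, smul_eq_mul, mul_comm]

lemma exists_dual {V : Type*} [AddCommGroup V] [Module ℂ V] (U : Submodule ℂ V) {v : V}
    (hv : v ∉ U) : ∃ f : V →ₗ[ℂ] ℂ, f v ≠ 0 ∧ ∀ u ∈ U, f u = 0 := by
  have hq : U.mkQ v ≠ 0 := by
    simpa [Submodule.mkQ_apply, Submodule.Quotient.mk_eq_zero] using hv
  have hg : ¬ ∀ g : Module.Dual ℂ (V ⧸ U), g (U.mkQ v) = 0 := fun h =>
    hq ((Module.forall_dual_apply_eq_zero_iff ℂ _).mp h)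
  push_neg at hg
  obtain ⟨g, hg⟩ := hg
  refine ⟨g.comp U.mkQ, hg, fun u hu => ?_⟩
  have : U.mkQ u = 0 := (Submodule.Quotient.mk_eq_zero U).mpr hu
  simp [LinearMap.comp_apply, this]

lemma choose_vf {ψ : (ι₁ → Fin d) → ℂ} (hψ : ψ ≠ 0) {l : ℕ} (hl : l ≤ Nstab ψ) :
    ∃ v ∈ Wk ψ l, ∃ f : ((ι₁ → Fin d) → ℂ) →ₗ[ℂ] ℂ, f v ≠ 0 ∧
      ∀ l' : ℕ, l' < l → ∀ a ∈ Wk ψ l', f a = 0 := by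
  rcases Nat.eq_zero_or_pos l with rfl | hl0
  · refine ⟨ψ, mem_Wk_self ψ 0, ?_⟩
    obtain ⟨f, hf1, -⟩ := exists_dual (⊥ : Submodule ℂ ((ι₁ → Fin d) → ℂ))
      (v := ψ) (by simpa using hψ)
    exact ⟨f, hf1, fun l' hl' => absurd hl' (by omega)⟩
  · have hne := Wk_ne_of_lt (χ := ψ) (show l - 1 < Nstab ψ by omega)
    rw [show l - 1 + 1 = l by omega] at hne
    have hlt : Wk ψ (l - 1) < Wk ψ l := lt_of_le_of_ne (Wk_mono (by omega)) (Ne.symm hne)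
    obtain ⟨v, hvmem, hvnot⟩ := SetLike.exists_of_lt hlt
    obtain ⟨f, hf1, hf2⟩ := exists_dual _ hvnot
    exact ⟨v, hvmem, f, hf1, fun l' hl' a ha => hf2 a (Wk_mono (show l' ≤ l - 1 by omega) ha)⟩

lemma strict_below {ψ : (ι₁ → Fin d) → ℂ} {φ : (ι₂ → Fin d) → ℂ}
    (hψ : ψ ≠ 0) (hφ : φ ≠ 0) (z₁ : ι₁ → Fin d) (z₂ : ι₂ → Fin d) {k : ℕ}
    (hk : k < Nstab ψ + Nstab φ) :
    Wk (tens ψ φ) (k + 1) ≠ Wk (tens ψ φ) k := by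
  intro hEq
  have hS : SS ψ φ (k + 1) = SS ψ φ k := by
    rw [← Wk_tens_eq ψ φ (k+1) z₁ z₂, ← Wk_tens_eq ψ φ k z₁ z₂, hEq]
  obtain ⟨l, m, hl, hm, hlm⟩ : ∃ l m : ℕ, l ≤ Nstab ψ ∧ m ≤ Nstab φ ∧ l + m = k + 1 := by
    rcases le_or_gt (k + 1) (Nstab ψ) with h | h
    · exact ⟨k + 1, 0, h, Nat.zero_le _, rfl⟩
    · exact ⟨Nstab ψ, k + 1 - Nstab ψ, le_rfl, by omega, by omega⟩
  obtain ⟨v, hv, f, hf1, hf2⟩ := choose_vf hψ hl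
  obtain ⟨w, hw, g, hg1, hg2⟩ := choose_vf hφ hm
  set F := f.comp (contractR g) with hF
  have hFtens : ∀ (a : (ι₁ → Fin d) → ℂ) (b : (ι₂ → Fin d) → ℂ),
      F (tens a b) = g b * f a := by
    intro a b
    rw [hF, LinearMap.comp_apply, contractR_tens, _root_.map_smul, smul_eq_mul]
  have hker : SS ψ φ k ≤ LinearMap.ker F := by
    apply Submodule.span_le.mpr
    rintro u ⟨l', m', hlm', a, ha, b, hb, rfl⟩
    rw [SetLike.mem_coe, LinearMap.mem_ker, hFtens]
    rcases (show l' < l ∨ m' < m by omega) with h | h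
    · rw [hf2 l' h a ha, mul_zero]
    · rw [hg2 m' h b hb, zero_mul]
  have hmem : tens v w ∈ SS ψ φ k := by
    rw [← hS]
    exact Submodule.subset_span ⟨l, m, by omega, v, hv, w, hw, rfl⟩
  have := hker hmem
  rw [LinearMap.mem_ker, hFtens] at this
  exact mul_ne_zero hg1 hf1 this


end Double

end EntPolyAux
end

open EntPolyAux

open Matrix in
/-- For pure states `ψ` and `φ` of disjoint sets of qudits,
`N_{ψ⊗φ} = N_ψ + N_φ`. -/
theorem Nstab_tens {ι₁ ι₂ : Type} [Fintype ι₁] [Fintype ι₂]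
    [DecidableEq ι₁] [DecidableEq ι₂] {d : ℕ}
    (ψ : (ι₁ → Fin d) → ℂ) (φ : (ι₂ → Fin d) → ℂ) (hψ : ψ ≠ 0) (hφ : φ ≠ 0) :
    Nstab (tens ψ φ) = Nstab ψ + Nstab φ := by
  have hne1 : Nonempty (ι₁ → Fin d) := by
    by_contra h
    rw [not_nonempty_iff] at h
    exact hψ (funext fun x => (h.false x).elim)
  have hne2 : Nonempty (ι₂ → Fin d) := by
    by_contra h
    rw [not_nonempty_iff] at h
    exact hφ (funext fun x => (h.false x).elim)
  obtain ⟨z₁⟩ := hne1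
  obtain ⟨z₂⟩ := hne2
  set n := Nstab ψ + Nstab φ with hn
  have hstab : Wk (tens ψ φ) (n + 1) = Wk (tens ψ φ) n := by
    rw [Wk_tens_eq ψ φ (n+1) z₁ z₂, Wk_tens_eq ψ φ n z₁ z₂]
    refine le_antisymm ?_ (Submodule.span_mono ?_)
    · apply Submodule.span_le.mpr
      rintro v ⟨l, m, hlm, a, ha, b, hb, rfl⟩
      by_cases hlm' : l + m ≤ n
      · exact Submodule.subset_span ⟨l, m, hlm', a, ha, b, hb, rfl⟩
      · rcases (show Nstab ψ < l ∨ Nstab φ < m by omega) with h | h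
        · have ha' : a ∈ Wk ψ (l - 1) := by
            rw [Wk_stab_ge z₁ ψ (show Nstab ψ ≤ l by omega)] at ha
            exact Wk_mono (show Nstab ψ ≤ l - 1 by omega) ha
          exact Submodule.subset_span ⟨l - 1, m, by omega, a, ha', b, hb, rfl⟩
        · have hb' : b ∈ Wk φ (m - 1) := by
            rw [Wk_stab_ge z₂ φ (show Nstab φ ≤ m by omega)] at hb
            exact Wk_mono (show Nstab φ ≤ m - 1 by omega) hb
          exact Submodule.subset_span ⟨l, m - 1, by omega, a, ha, b, hb', rfl⟩
    · rintro v ⟨l, m, hlm, rest⟩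
      exact ⟨l, m, by omega, rest⟩
  have hle : Nstab (tens ψ φ) ≤ n := Nat.sInf_le hstab
  have hge : n ≤ Nstab (tens ψ φ) := by
    by_contra h
    push_neg at h
    exact strict_below hψ hφ z₁ z₂ h (Nstab_spec (tens ψ φ))
  omega
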